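/- Let (Ω,M) be a finite transformation monoid containing an Eulerian subset A ⊆ M, i.e., the submonoid generated by A is transitive on Ω and for every ω ∈ Ω one has |A| = Σ_{a∈A} |{α : αa = ω}|. Then for every m in the minimal ideal I(M), the partition ker m is uniform: all fibers {α : αm = ω} with ω ∈ Ωm have the same cardinality. In particular, if |Ω| is a prime number, then either every element of M is a bijection of Ω (M is a group) or M contains a constant map. -/

import Mathlib

open Finset

namespace EulerianNeumannAux

variable {Ω : Type*} [Fintype Ω] [DecidableEq Ω]

/-- Euler condition in averaging form. -/
lemma euler_sum (A : Finset (Function.End Ω))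
    (hEuler : ∀ ω : Ω,
      A.card = ∑ a ∈ A, (@Finset.filter Ω (fun α : Ω => a α = ω) (fun α => ‹DecidableEq Ω› (a α) ω) Finset.univ).card)
    (g : Ω → ℝ) :
    ∑ a ∈ A, ∑ α, g (a α) = A.card * ∑ β, g β := by
  have h1 : ∀ a ∈ A, ∑ α, g (a α)
      = ∑ β, ((@Finset.filter Ω (fun α : Ω => a α = β) (fun α => ‹DecidableEq Ω› (a α) β) Finset.univ).card : ℝ) * g β := by
    intro a _
    rw [← Finset.sum_fiberwise_of_maps_to (g := fun α => a α) (t := Finset.univ)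
        (fun x _ => Finset.mem_univ _) (fun α => g (a α))]
    refine Finset.sum_congr rfl fun β _ => ?_
    have h2 : ∀ α ∈ @Finset.filter Ω (fun α : Ω => a α = β) (fun α => ‹DecidableEq Ω› (a α) β) Finset.univ, g (a α) = g β := by
      intro α hα
      exact congrArg g (@Finset.mem_filter Ω (fun α : Ω => a α = β) (fun α => ‹DecidableEq Ω› (a α) β) Finset.univ α |>.mp hα).2
    rw [Finset.sum_congr rfl h2, Finset.sum_const, nsmul_eq_mul]
  rw [Finset.sum_congr rfl h1, Finset.sum_comm, Finset.mul_sum]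
  refine Finset.sum_congr rfl fun β _ => ?_
  rw [← Finset.sum_mul]
  congr 1
  rw [← Nat.cast_sum, ← hEuler β]

/-- The averaging (Markov) operator of `A`. -/
noncomputable def Xop (A : Finset (Function.End Ω)) : Module.End ℝ (Ω → ℝ) :=
  (A.card : ℝ)⁻¹ • ∑ a ∈ A, LinearMap.funLeft ℝ ℝ (a : Ω → Ω)

lemma Xop_apply (A : Finset (Function.End Ω)) (v : Ω → ℝ) (α : Ω) :
    Xop A v α = (A.card : ℝ)⁻¹ * ∑ a ∈ A, v (a α) := by
  have := LinearMap.sum_apply A (fun a : Function.End Ω => LinearMap.funLeft ℝ ℝ (a : Ω → Ω)) v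
  simp [Xop, this, Finset.sum_apply, LinearMap.funLeft_apply]
  left; rfl

lemma Xop_sum (A : Finset (Function.End Ω)) (hA : A.Nonempty)
    (hEuler : ∀ ω : Ω,
      A.card = ∑ a ∈ A, (@Finset.filter Ω (fun α : Ω => a α = ω) (fun α => ‹DecidableEq Ω› (a α) ω) Finset.univ).card)
    (v : Ω → ℝ) :
    ∑ α, Xop A v α = ∑ α, v α := by
  have hcard : (A.card : ℝ) ≠ 0 := by
    exact_mod_cast Finset.card_ne_zero_of_mem hA.choose_spec
  have key : ∑ α, Xop A v α = (A.card : ℝ)⁻¹ * ∑ a ∈ A, ∑ α, v (a α) := by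
    calc ∑ α, Xop A v α = ∑ α, ∑ a ∈ A, (A.card:ℝ)⁻¹ * v (a α) := by
          simp_rw [Xop_apply, Finset.mul_sum]
      _ = ∑ a ∈ A, ∑ α, (A.card:ℝ)⁻¹ * v (a α) := Finset.sum_comm
      _ = (A.card : ℝ)⁻¹ * ∑ a ∈ A, ∑ α, v (a α) := by simp_rw [← Finset.mul_sum]
  rw [key, euler_sum A hEuler v, ← mul_assoc, inv_mul_cancel₀ hcard, one_mul]

lemma Xop_const (A : Finset (Function.End Ω)) (hA : A.Nonempty) (c : ℝ) :
    Xop A (fun _ => c) = fun _ => c := by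
  have hcard : (A.card : ℝ) ≠ 0 := by
    exact_mod_cast Finset.card_ne_zero_of_mem hA.choose_spec
  funext α
  rw [Xop_apply, Finset.sum_const, nsmul_eq_mul, ← mul_assoc, inv_mul_cancel₀ hcard,
    one_mul]

lemma Xop_pow_const (A : Finset (Function.End Ω)) (hA : A.Nonempty) (c : ℝ) (k : ℕ) :
    (Xop A ^ k) (fun _ => c) = fun _ => c := by
  induction k with
  | zero => simp
  | succ k ih =>
    rw [pow_succ', Module.End.mul_apply, ih, Xop_const A hA]

/-- Max principle: fixed vectors of `Xop A` are constant. -/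
lemma Xop_fixed_const [Nonempty Ω] (A : Finset (Function.End Ω)) (hA : A.Nonempty)
    (htrans : ∀ α β : Ω,
      ∃ m ∈ Submonoid.closure (↑A : Set (Function.End Ω)), m α = β)
    (v : Ω → ℝ) (hv : Xop A v = v) : ∃ c : ℝ, v = fun _ => c := by
  have hcard : (A.card : ℝ) ≠ 0 := by
    exact_mod_cast Finset.card_ne_zero_of_mem hA.choose_spec
  obtain ⟨α₀, -, hmax⟩ := Finset.exists_max_image Finset.univ v ⟨Classical.arbitrary Ω, Finset.mem_univ _⟩
  set M := v α₀ with hM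
  have hle : ∀ β : Ω, v β ≤ M := fun β => hmax β (Finset.mem_univ β)
  -- one step
  have hstep : ∀ α : Ω, v α = M → ∀ a ∈ A, v (a α) = M := by
    intro α hα a ha
    by_contra hne
    have hlt : v (a α) < M := lt_of_le_of_ne (hle _) hne
    have hsum : ∑ b ∈ A, v (b α) = A.card * M := by
      have := congrFun hv α
      rw [Xop_apply] at this
      rw [hα] at this
      field_simp at this
      linarith [this]
    have : ∑ b ∈ A, v (b α) < ∑ b ∈ A, M := by
      refine Finset.sum_lt_sum (fun b _ => hle _) ⟨a, ha, hlt⟩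
    rw [Finset.sum_const, nsmul_eq_mul] at this
    rw [hsum] at this
    exact lt_irrefl _ this
  -- propagate along the closure
  have hclos : ∀ g ∈ Submonoid.closure (↑A : Set (Function.End Ω)),
      ∀ α : Ω, v α = M → v (g α) = M := by
    intro g hg
    induction hg using Submonoid.closure_induction with
    | mem a ha => exact fun α hα => hstep α hα a ha
    | one => exact fun α hα => hα
    | mul g h _ _ ihg ihh => exact fun α hα => ihg _ (ihh _ hα)
  have hall : ∀ β : Ω, v β = M := by
    intro β
    obtain ⟨g, hg, hgβ⟩ := htrans α₀ β
    rw [← hgβ]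
    exact hclos g hg α₀ rfl
  exact ⟨M, funext hall⟩

/-- Surjectivity of `1 - X` onto mean-zero functions. -/
lemma exists_solution [Nonempty Ω] (A : Finset (Function.End Ω)) (hA : A.Nonempty)
    (htrans : ∀ α β : Ω,
      ∃ m ∈ Submonoid.closure (↑A : Set (Function.End Ω)), m α = β)
    (hEuler : ∀ ω : Ω,
      A.card = ∑ a ∈ A, (@Finset.filter Ω (fun α : Ω => a α = ω) (fun α => ‹DecidableEq Ω› (a α) ω) Finset.univ).card)
    (d : Ω → ℝ) (hd : ∑ α, d α = 0) :
    ∃ z : Ω → ℝ, d = z - Xop A z := by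
  classical
  set n := Fintype.card Ω with hn
  have hnpos : 0 < n := Fintype.card_pos
  set f : Module.End ℝ (Ω → ℝ) := 1 - Xop A with hf
  set l : (Ω → ℝ) →ₗ[ℝ] ℝ := ∑ α : Ω, LinearMap.proj α with hl
  have hlapp : ∀ v : Ω → ℝ, l v = ∑ α, v α := by
    intro v; simp [hl, LinearMap.sum_apply]
  -- kernel of f is the constants
  have hker : LinearMap.ker f = Submodule.span ℝ {(fun _ => (1:ℝ) : Ω → ℝ)} := by
    apply le_antisymm
    · intro v hv
      have : Xop A v = v := by
        have := (LinearMap.mem_ker).mp hv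
        have h2 : v - Xop A v = 0 := by
          simpa [hf, LinearMap.sub_apply, Module.End.one_apply] using this
        have := sub_eq_zero.mp h2
        exact this.symm
      obtain ⟨c, hc⟩ := Xop_fixed_const A hA htrans v this
      rw [Submodule.mem_span_singleton]
      exact ⟨c, by funext α; simp [hc]⟩
    · rw [Submodule.span_le]
      intro x hx
      simp only [Set.mem_singleton_iff] at hx
      subst hx
      simp only [SetLike.mem_coe, LinearMap.mem_ker, hf, LinearMap.sub_apply,
        Module.End.one_apply]
      rw [Xop_const A hA]
      simp
  have hone_ne : (fun _ => (1:ℝ) : Ω → ℝ) ≠ 0 := by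
    intro h
    have := congrFun h (Classical.arbitrary Ω)
    simpa using this
  have hkerrank : Module.finrank ℝ (LinearMap.ker f) = 1 := by
    rw [hker]; exact finrank_span_singleton hone_ne
  have htotal : Module.finrank ℝ (Ω → ℝ) = n := Module.finrank_pi ℝ
  have hrange : Module.finrank ℝ (LinearMap.range f) + 1 = n := by
    have := LinearMap.finrank_range_add_finrank_ker f
    rw [hkerrank, htotal] at this
    exact this
  -- l is surjective
  have hlsurj : Function.Surjective l := by
    intro x
    refine ⟨fun _ => x / n, ?_⟩
    rw [hlapp]
    rw [Finset.sum_const, nsmul_eq_mul, Finset.card_univ]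
    field_simp
    rw [hn]; ring
  have hlrange : LinearMap.range l = ⊤ := LinearMap.range_eq_top.mpr hlsurj
  have hlker : Module.finrank ℝ (LinearMap.ker l) + 1 = n := by
    have := LinearMap.finrank_range_add_finrank_ker l
    rw [hlrange, htotal] at this
    have h1 : Module.finrank ℝ (⊤ : Submodule ℝ ℝ) = 1 := by
      rw [finrank_top]; exact Module.finrank_self ℝ
    rw [h1] at this
    omega
  -- range f ≤ ker l
  have hsub : LinearMap.range f ≤ LinearMap.ker l := by
    rintro x ⟨v, rfl⟩
    rw [LinearMap.mem_ker, hlapp]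
    have : ∑ α, (v α - Xop A v α) = 0 := by
      rw [Finset.sum_sub_distrib, Xop_sum A hA hEuler, sub_self]
    simpa [hf, LinearMap.sub_apply, Module.End.one_apply] using this
  have hEq : LinearMap.range f = LinearMap.ker l := by
    refine Submodule.eq_of_le_of_finrank_eq hsub ?_
    omega
  have hdmem : d ∈ LinearMap.ker l := by
    rw [LinearMap.mem_ker, hlapp]; exact hd
  rw [← hEq] at hdmem
  obtain ⟨z, hz⟩ := hdmem
  refine ⟨z, ?_⟩
  rw [← hz]
  simp [hf, LinearMap.sub_apply, Module.End.one_apply]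

/-- sup bound along iterates. -/
lemma Xop_pow_bound [Nonempty Ω] (A : Finset (Function.End Ω)) (hA : A.Nonempty)
    (z : Ω → ℝ) (C : ℝ) (hC : ∀ α, |z α| ≤ C) :
    ∀ (k : ℕ) (α : Ω), |((Xop A ^ k) z) α| ≤ C := by
  have hcard : (0:ℝ) < A.card := by
    exact_mod_cast Finset.card_pos.mpr hA
  have hstep : ∀ (w : Ω → ℝ), (∀ β, |w β| ≤ C) → ∀ α, |Xop A w α| ≤ C := by
    intro w hw α
    rw [Xop_apply, abs_mul, abs_inv, Nat.abs_cast]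
    have h1 : |∑ a ∈ A, w (a α)| ≤ ∑ a ∈ A, |w (a α)| := Finset.abs_sum_le_sum_abs _ _
    have h2 : ∑ a ∈ A, |w (a α)| ≤ A.card * C := by
      calc ∑ a ∈ A, |w (a α)| ≤ ∑ a ∈ A, C := Finset.sum_le_sum (fun a _ => hw _)
        _ = A.card * C := by rw [Finset.sum_const, nsmul_eq_mul]
    calc (A.card:ℝ)⁻¹ * |∑ a ∈ A, w (a α)| ≤ (A.card:ℝ)⁻¹ * (A.card * C) := by
          exact mul_le_mul_of_nonneg_left (le_trans h1 h2) (by positivity)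
      _ = C := by field_simp
  intro k
  induction k with
  | zero => simpa using hC
  | succ k ih =>
    intro α
    rw [pow_succ', Module.End.mul_apply]
    exact hstep _ ih α


/-- The key counting identity: the mass of `Xᵏ(indicator of a fiber)` on the image is 1. -/
lemma count_one (A : Finset (Function.End Ω)) (hA : A.Nonempty)
    (m : Ω → Ω) (ω : Ω)
    (hone : ∀ g : Function.End Ω, g ∈ Submonoid.closure (↑A : Set (Function.End Ω)) →
      ((Finset.image m Finset.univ).filter fun t => m (g t) = ω).card = 1) :
    ∀ (k : ℕ) (g : Function.End Ω), g ∈ Submonoid.closure (↑A : Set (Function.End Ω)) →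
      ∑ t ∈ Finset.image m Finset.univ,
        ((Xop A ^ k) (fun α => if m (g α) = ω then (1:ℝ) else 0)) t = 1 := by
  classical
  have hcard : (A.card : ℝ) ≠ 0 := by
    exact_mod_cast Finset.card_ne_zero_of_mem hA.choose_spec
  intro k
  induction k with
  | zero =>
    intro g hg
    simp only [pow_zero, Module.End.one_apply]
    rw [Finset.sum_boole, hone g hg]
    norm_num
  | succ k ih =>
    intro g hg
    have hXu : (Xop A) (fun α => if m (g α) = ω then (1:ℝ) else 0)
        = (A.card : ℝ)⁻¹ • ∑ a ∈ A, (fun α => if m ((g * a) α) = ω then (1:ℝ) else 0) := by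
      funext α
      rw [Xop_apply]
      simp only [Pi.smul_apply, Finset.sum_apply, smul_eq_mul]
      rfl
    rw [pow_succ, Module.End.mul_apply, hXu, map_smul, map_sum]
    simp only [Pi.smul_apply, Finset.sum_apply, smul_eq_mul]
    rw [← Finset.mul_sum, Finset.sum_comm]
    have hterm : ∀ a ∈ A, ∑ t ∈ Finset.image m Finset.univ,
        ((Xop A ^ k) (fun α => if m ((g * a) α) = ω then (1:ℝ) else 0)) t = 1 := by
      intro a ha
      exact ih (g * a) (Submonoid.mul_mem _ hg (Submonoid.subset_closure (Finset.mem_coe.mpr ha)))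
    rw [Finset.sum_congr rfl hterm, Finset.sum_const, nsmul_eq_mul, mul_one,
      inv_mul_cancel₀ hcard]

/-- Rigidity: for `m` in the minimal ideal and any `g ∈ S`, the map `t ↦ m (g t)`
is a bijection of the image of `m`; hence each fiber pullback meets the image once. -/
lemma filter_card_one (S : Set (Ω → Ω)) (hcomp : ∀ m ∈ S, ∀ n ∈ S, n ∘ m ∈ S)
    (m : Ω → Ω) (hm : m ∈ S)
    (hmin : ∀ n ∈ S, ∃ u ∈ S, ∃ v ∈ S, m = v ∘ n ∘ u)
    (g : Ω → Ω) (hg : g ∈ S) (ω : Ω) (hω : ω ∈ Finset.image m Finset.univ) :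
    ((Finset.image m Finset.univ).filter fun t => m (g t) = ω).card = 1 := by
  classical
  set T := Finset.image m Finset.univ with hT
  set φ : Ω → Ω := fun t => m (g t) with hφ
  have hh : (fun x => m (g (m x))) ∈ S := by
    have h1 : g ∘ m ∈ S := hcomp m hm g hg
    exact hcomp (g ∘ m) h1 m hm
  obtain ⟨u, hu, v, hv, heq⟩ := hmin _ hh
  have himT : Finset.image φ T ⊆ T := by
    intro y hy
    obtain ⟨t, ht, rfl⟩ := Finset.mem_image.mp hy
    exact Finset.mem_image.mpr ⟨g t, Finset.mem_univ _, rfl⟩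
  have h3 : T ⊆ Finset.image v (Finset.image (fun x => m (g (m x))) Finset.univ) := by
    intro y hy
    obtain ⟨x, -, rfl⟩ := Finset.mem_image.mp hy
    have hx : m x = v ((fun x => m (g (m x))) (u x)) := by
      conv_lhs => rw [heq]
      rfl
    exact Finset.mem_image.mpr ⟨_, Finset.mem_image.mpr ⟨u x, Finset.mem_univ _, rfl⟩, hx.symm⟩
  have h4 : Finset.image (fun x => m (g (m x))) Finset.univ ⊆ Finset.image φ T := by
    intro y hy
    obtain ⟨x, -, rfl⟩ := Finset.mem_image.mp hy
    exact Finset.mem_image.mpr ⟨m x, Finset.mem_image.mpr ⟨x, Finset.mem_univ _, rfl⟩, rfl⟩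
  have hcards : T.card ≤ (Finset.image φ T).card := by
    calc T.card ≤ (Finset.image v (Finset.image (fun x => m (g (m x))) Finset.univ)).card :=
          Finset.card_le_card h3
      _ ≤ (Finset.image (fun x => m (g (m x))) Finset.univ).card := Finset.card_image_le
      _ ≤ (Finset.image φ T).card := Finset.card_le_card h4
  have heqT : Finset.image φ T = T := Finset.eq_of_subset_of_card_le himT hcards
  have hinj : Set.InjOn φ ↑T := Finset.injOn_of_card_image_eq (by rw [heqT])
  obtain ⟨t₀, ht₀T, ht₀⟩ := Finset.mem_image.mp (heqT ▸ hω)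
  rw [Finset.card_eq_one]
  refine ⟨t₀, ?_⟩
  ext x
  simp only [Finset.mem_filter, Finset.mem_singleton]
  constructor
  · rintro ⟨hxT, hxω⟩
    exact hinj (Finset.mem_coe.mpr hxT) (Finset.mem_coe.mpr ht₀T) (hxω.trans ht₀.symm)
  · rintro rfl
    exact ⟨ht₀T, ht₀⟩

/-- If the closure of `A` is transitive and `Ω` has at least two points, `A` is nonempty. -/
lemma A_nonempty (A : Finset (Function.End Ω))
    (htrans : ∀ α β : Ω,
      ∃ m ∈ Submonoid.closure (↑A : Set (Function.End Ω)), m α = β)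
    (h2 : 2 ≤ Fintype.card Ω) : A.Nonempty := by
  by_contra hAe
  rw [Finset.not_nonempty_iff_eq_empty] at hAe
  obtain ⟨α, β, hne⟩ := Fintype.exists_pair_of_one_lt_card (α := Ω) (by omega)
  obtain ⟨g, hg, hgαβ⟩ := htrans α β
  rw [hAe] at hg
  simp only [Finset.coe_empty, Submonoid.closure_empty, Submonoid.mem_bot] at hg
  subst hg
  exact hne (by rw [← hgαβ]; rfl)

/-- The main counting lemma: uniformity of kernels of minimal-ideal elements. -/
lemma key [Nonempty Ω]
    (S : Set (Ω → Ω)) (hid : id ∈ S) (hcomp : ∀ m ∈ S, ∀ n ∈ S, n ∘ m ∈ S)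
    (A : Finset (Function.End Ω)) (hA : A.Nonempty) (hAS : ∀ a ∈ A, (a : Ω → Ω) ∈ S)
    (htrans : ∀ α β : Ω,
      ∃ m ∈ Submonoid.closure (↑A : Set (Function.End Ω)), m α = β)
    (hEuler : ∀ ω : Ω,
      A.card = ∑ a ∈ A, (@Finset.filter Ω (fun α : Ω => a α = ω) (fun α => ‹DecidableEq Ω› (a α) ω) Finset.univ).card)
    (m : Ω → Ω) (hm : m ∈ S)
    (hmin : ∀ n ∈ S, ∃ u ∈ S, ∃ v ∈ S, m = v ∘ n ∘ u)
    (ω : Ω) (hω : ω ∈ Finset.image m Finset.univ) :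
    (Finset.image m Finset.univ).card * (Finset.univ.filter fun α : Ω => m α = ω).card
      = Fintype.card Ω := by
  classical
  set n := Fintype.card Ω with hn
  set T := Finset.image m Finset.univ with hT
  set r := T.card with hr
  set c := (Finset.univ.filter fun α : Ω => m α = ω).card with hc
  have hnpos : 0 < n := Fintype.card_pos
  have hSclos : ∀ g : Function.End Ω,
      g ∈ Submonoid.closure (↑A : Set (Function.End Ω)) → (g : Ω → Ω) ∈ S := by
    intro g hg
    induction hg using Submonoid.closure_induction with
    | mem a ha => exact hAS a (Finset.mem_coe.mp ha)
    | one => exact hid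
    | mul g h hg hh ihg ihh => exact hcomp h ihh g ihg
  have hone : ∀ g : Function.End Ω, g ∈ Submonoid.closure (↑A : Set (Function.End Ω)) →
      (T.filter fun t => m (g t) = ω).card = 1 :=
    fun g hg => filter_card_one S hcomp m hm hmin g (hSclos g hg) ω hω
  set u : Ω → ℝ := fun α => if m α = ω then (1:ℝ) else 0 with hu
  have hsumu : ∑ α, u α = c := by rw [hu]; rw [Finset.sum_boole]
  set d : Ω → ℝ := fun α => u α - (c : ℝ) / n with hd
  have hsumd : ∑ α, d α = 0 := by
    rw [hd]
    rw [Finset.sum_sub_distrib, hsumu, Finset.sum_const, nsmul_eq_mul, Finset.card_univ, ← hn]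
    field_simp
    ring
  obtain ⟨z, hz⟩ := exists_solution A hA htrans hEuler d hsumd
  have hu2 : u = (fun _ => (c:ℝ)/n) + (z - Xop A z) := by
    funext α
    have h := congrFun hz α
    simp only [hd, Pi.sub_apply] at h
    simp only [Pi.add_apply, Pi.sub_apply]
    linarith [h]
  set sseq : ℕ → ℝ := fun k => ∑ t ∈ T, ((Xop A ^ k) z) t with hs
  have hmain : ∀ k : ℕ, (r:ℝ) * ((c:ℝ)/n) + (sseq k - sseq (k+1)) = 1 := by
    intro k
    have h1 := count_one A hA m ω hone k 1 (Submonoid.one_mem _)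
    have h2 : (fun α => if m ((1 : Function.End Ω) α) = ω then (1:ℝ) else 0) = u := rfl
    rw [h2, hu2, map_add, map_sub, Xop_pow_const A hA] at h1
    have h3 : (Xop A ^ k) (Xop A z) = (Xop A ^ (k+1)) z := by
      rw [pow_succ, Module.End.mul_apply]
    rw [h3] at h1
    simp only [Pi.add_apply, Pi.sub_apply] at h1
    rw [Finset.sum_add_distrib, Finset.sum_sub_distrib, Finset.sum_const, nsmul_eq_mul] at h1
    rw [← h1, hs]
  set ε : ℝ := 1 - (r:ℝ) * ((c:ℝ)/n) with hε
  have hrec : ∀ k : ℕ, sseq (k+1) = sseq k - ε := by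
    intro k
    have := hmain k
    rw [hε]
    linarith [this]
  have hlin : ∀ k : ℕ, sseq k = sseq 0 - k * ε := by
    intro k
    induction k with
    | zero => simp
    | succ k ih => rw [hrec k, ih]; push_cast; ring
  set C : ℝ := ∑ α, |z α| with hC
  have hCb : ∀ α, |z α| ≤ C := by
    intro α
    exact Finset.single_le_sum (f := fun α => |z α|) (fun _ _ => abs_nonneg _)
      (Finset.mem_univ α)
  have hbound : ∀ k : ℕ, |sseq k| ≤ (r:ℝ) * C := by
    intro k
    rw [hs]
    calc |∑ t ∈ T, ((Xop A ^ k) z) t| ≤ ∑ t ∈ T, |((Xop A ^ k) z) t| :=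
          Finset.abs_sum_le_sum_abs _ _
      _ ≤ ∑ _t ∈ T, C := Finset.sum_le_sum (fun t _ => Xop_pow_bound A hA z C hCb k t)
      _ = (r:ℝ) * C := by rw [Finset.sum_const, nsmul_eq_mul]
  have hε0 : ε = 0 := by
    by_contra hne
    obtain ⟨k, hk⟩ := exists_nat_gt ((2 * ((r:ℝ) * C)) / |ε|)
    have h1 : |(k:ℝ) * ε| ≤ 2 * ((r:ℝ) * C) := by
      have := hlin k
      have h2 : (k:ℝ) * ε = sseq 0 - sseq k := by linarith [this]
      rw [h2]
      calc |sseq 0 - sseq k| ≤ |sseq 0| + |sseq k| := abs_sub _ _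
        _ ≤ 2 * ((r:ℝ) * C) := by linarith [hbound 0, hbound k]
    have hεpos : 0 < |ε| := abs_pos.mpr hne
    have h3 : 2 * ((r:ℝ) * C) < (k:ℝ) * |ε| := by
      rw [div_lt_iff₀ hεpos] at hk
      linarith [hk]
    rw [abs_mul, Nat.abs_cast] at h1
    linarith [h1, h3]
  have h4 : (r:ℝ) * ((c:ℝ)/n) = 1 := by rw [hε] at hε0; linarith [hε0]
  have h5 : (r:ℝ) * (c:ℝ) = (n:ℝ) := by
    have hn0 : (n:ℝ) ≠ 0 := by exact_mod_cast hnpos.ne'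
    field_simp at h4
    linarith [h4]
  exact_mod_cast h5

end EulerianNeumannAux


theorem eulerian_neumann {Ω : Type*} [Fintype Ω] [DecidableEq Ω]
    (S : Set (Ω → Ω)) (hid : id ∈ S) (hcomp : ∀ m ∈ S, ∀ n ∈ S, n ∘ m ∈ S)
    (A : Finset (Function.End Ω)) (hAS : ∀ a ∈ A, (a : Ω → Ω) ∈ S)
    (htrans : ∀ α β : Ω,
      ∃ m ∈ Submonoid.closure (↑A : Set (Function.End Ω)), m α = β)
    (hEuler : ∀ ω : Ω,
      A.card = ∑ a ∈ A, (@Finset.filter Ω (fun α : Ω => a α = ω) (fun α => ‹DecidableEq Ω› (a α) ω) Finset.univ).card) :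
    (∀ m ∈ S, (∀ n ∈ S, ∃ u ∈ S, ∃ v ∈ S, m = v ∘ n ∘ u) →
      ∀ ω ∈ Set.range m, ∀ ω' ∈ Set.range m,
        {α : Ω | m α = ω}.ncard = {α : Ω | m α = ω'}.ncard) ∧
    ((Fintype.card Ω).Prime →
      (∀ m ∈ S, Function.Bijective m) ∨ ∃ c : Ω, Function.const Ω c ∈ S) := by
  classical
  open EulerianNeumannAux in
  constructor
  · intro m hm hmin ω hω ω' hω'
    obtain ⟨x, hx⟩ := hω
    obtain ⟨x', hx'⟩ := hω'
    haveI : Nonempty Ω := ⟨x⟩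
    by_cases hcard : Fintype.card Ω ≤ 1
    · haveI : Subsingleton Ω := Fintype.card_le_one_iff_subsingleton.mp hcard
      have hee : ω = ω' := Subsingleton.elim _ _
      rw [hee]
    · have hA : A.Nonempty := A_nonempty A htrans (by omega)
      have hω1 : ω ∈ Finset.image m Finset.univ :=
        Finset.mem_image.mpr ⟨x, Finset.mem_univ _, hx⟩
      have hω'1 : ω' ∈ Finset.image m Finset.univ :=
        Finset.mem_image.mpr ⟨x', Finset.mem_univ _, hx'⟩
      have k1 := key S hid hcomp A hA hAS htrans hEuler m hm hmin ω hω1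
      have k2 := key S hid hcomp A hA hAS htrans hEuler m hm hmin ω' hω'1
      have hrpos : 0 < (Finset.image m Finset.univ).card :=
        Finset.card_pos.mpr ⟨ω, hω1⟩
      have hcc : (Finset.univ.filter fun α : Ω => m α = ω).card
          = (Finset.univ.filter fun α : Ω => m α = ω').card :=
        Nat.eq_of_mul_eq_mul_left hrpos (k1.trans k2.symm)
      rw [Set.ncard_eq_toFinset_card', Set.ncard_eq_toFinset_card',
        Set.toFinset_setOf, Set.toFinset_setOf]
      exact hcc
  · intro hp
    haveI : Nonempty Ω := Fintype.card_pos_iff.mp hp.pos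
    have hA : A.Nonempty := A_nonempty A htrans hp.two_le
    have hSfin : S.Finite := Set.toFinite S
    set L : List (Ω → Ω) := hSfin.toFinset.toList with hL
    have hLmem : ∀ x : Ω → Ω, x ∈ L ↔ x ∈ S := by
      intro x
      rw [hL, Finset.mem_toList, Set.Finite.mem_toFinset]
    have hfold_mem : ∀ l : List (Ω → Ω), (∀ x ∈ l, x ∈ S) → l.foldr (· ∘ ·) id ∈ S := by
      intro l
      induction l with
      | nil => intro _; exact hid
      | cons a l ih =>
        intro hx
        have h1 : l.foldr (· ∘ ·) id ∈ S := ih (fun y hy => hx y (List.mem_cons_of_mem _ hy))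
        exact hcomp _ h1 a (hx a List.mem_cons_self)
    have hfold_init : ∀ (l : List (Ω → Ω)) (f : Ω → Ω),
        l.foldr (· ∘ ·) f = (l.foldr (· ∘ ·) id) ∘ f := by
      intro l
      induction l with
      | nil => intro f; rfl
      | cons a l ih =>
        intro f
        rw [List.foldr_cons, List.foldr_cons, ih f]
        rfl
    set m₀ : Ω → Ω := L.foldr (· ∘ ·) id with hm₀
    have hm₀S : m₀ ∈ S := hfold_mem L (fun y hy => (hLmem y).mp hy)
    have hm₀min : ∀ n ∈ S, ∃ u ∈ S, ∃ v ∈ S, m₀ = v ∘ n ∘ u := by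
      intro n hn
      obtain ⟨s, t, hst⟩ := List.append_of_mem ((hLmem n).mpr hn)
      refine ⟨t.foldr (· ∘ ·) id, ?_, s.foldr (· ∘ ·) id, ?_, ?_⟩
      · refine hfold_mem t fun y hy => (hLmem y).mp ?_
        rw [hst]
        exact List.mem_append_right _ (List.mem_cons_of_mem _ hy)
      · refine hfold_mem s fun y hy => (hLmem y).mp ?_
        rw [hst]
        exact List.mem_append_left _ hy
      · rw [hm₀, hst, List.foldr_append, hfold_init s]
        rfl
    obtain ⟨ω₀, hω₀⟩ : ∃ ω₀, ω₀ ∈ Finset.image m₀ Finset.univ :=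
      ⟨m₀ (Classical.arbitrary Ω),
        Finset.mem_image.mpr ⟨Classical.arbitrary Ω, Finset.mem_univ _, rfl⟩⟩
    have hkey := key S hid hcomp A hA hAS htrans hEuler m₀ hm₀S hm₀min ω₀ hω₀
    have hdvd : (Finset.image m₀ Finset.univ).card ∣ Fintype.card Ω := ⟨_, hkey.symm⟩
    rcases hp.eq_one_or_self_of_dvd _ hdvd with hr1 | hrp
    · right
      obtain ⟨c₀, hc₀⟩ := Finset.card_eq_one.mp hr1
      refine ⟨c₀, ?_⟩
      have hconst : Function.const Ω c₀ = m₀ := by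
        funext y
        have hmem : m₀ y ∈ Finset.image m₀ Finset.univ :=
          Finset.mem_image.mpr ⟨y, Finset.mem_univ _, rfl⟩
        rw [hc₀, Finset.mem_singleton] at hmem
        exact hmem.symm
      rw [hconst]
      exact hm₀S
    · left
      intro f hf
      have hm₀surj : Finset.image m₀ Finset.univ = Finset.univ :=
        (Finset.card_eq_iff_eq_univ _).mp hrp
      obtain ⟨u, hu, v, hv, heqf⟩ := hm₀min f hf
      have h1 : Finset.image m₀ Finset.univ
          ⊆ Finset.image v (Finset.image f (Finset.image u Finset.univ)) := by
        intro y hy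
        obtain ⟨w, -, rfl⟩ := Finset.mem_image.mp hy
        have : m₀ w = v (f (u w)) := by rw [heqf]; rfl
        exact Finset.mem_image.mpr ⟨f (u w),
          Finset.mem_image.mpr ⟨u w, Finset.mem_image.mpr ⟨w, Finset.mem_univ _, rfl⟩, rfl⟩,
          this.symm⟩
      have h2 : Fintype.card Ω ≤ (Finset.image f Finset.univ).card := by
        calc Fintype.card Ω = (Finset.image m₀ Finset.univ).card := hrp.symm
          _ ≤ (Finset.image v (Finset.image f (Finset.image u Finset.univ))).card :=
              Finset.card_le_card h1
          _ ≤ (Finset.image f (Finset.image u Finset.univ)).card := Finset.card_image_le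
          _ ≤ (Finset.image f Finset.univ).card :=
              Finset.card_le_card (Finset.image_subset_image (Finset.subset_univ _))
      have h3 : Finset.image f Finset.univ = Finset.univ :=
        (Finset.card_eq_iff_eq_univ _).mp (le_antisymm (Finset.card_le_univ _) h2)
      have hfs : Function.Surjective f := by
        intro y
        have hy : y ∈ Finset.image f Finset.univ := by
          rw [h3]
          exact Finset.mem_univ y
        obtain ⟨w, -, hw⟩ := Finset.mem_image.mp hy
        exact ⟨w, hw⟩
      exact ⟨Finite.injective_iff_surjective.mpr hfs, hfs⟩
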